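/- Let aR⁺ be the set of 4-tuples (a,b,g,f) of power series with a(0)=b(0)=g(0)=1, f(0)=0, f'(0)=1, with product (a,b,g,f)·(h,k,u,v) = ((a,b,g,f)·h, (b,g,f)·k, g·u(f), v(f)), where (a,b,g,f)·h = h_0 a + h_1 x b + x² g h̃̃(f) and h̃̃(x) = (h(x)−h_0−h_1 x)/x². Then aR⁺ is a group with identity (1,1,1,x), and the subset of 4-tuples of the form (a,b,1,x) is a normal subgroup with quotient isomorphic to the Riordan group. -/

import Mathlib

open PowerSeries Finset

/-- Shift: `shift h = (h - h₀)/x`, i.e. the series with coefficients `h₁, h₂, …`. -/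
noncomputable def shift (h : PowerSeries ℤ) : PowerSeries ℤ :=
  PowerSeries.mk fun n => coeff (n + 1) h

/-- Composition `h ∘ f` of formal power series (intended for `f` with zero constant term,
in which case `coeff n (f ^ k) = 0` for `k > n`). -/
noncomputable def comp (h f : PowerSeries ℤ) : PowerSeries ℤ :=
  PowerSeries.mk fun n => ∑ k ∈ Finset.range (n + 1), coeff k h * coeff n (f ^ k)

/-- Action of an almost-Riordan array `(a,g,f)` on a power series `b`:
`(a,g,f)·b = b₀ a + x g b̃(f)` where `b̃ = (b - b₀)/x`. -/
noncomputable def act (a g f b : PowerSeries ℤ) : PowerSeries ℤ :=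
  C (coeff 0 b) * a + X * g * comp (shift b) f

/-- Product of almost-Riordan arrays: `(a,g,f)·(b,u,v) = ((a,g,f)·b, g·u(f), v(f))`. -/
noncomputable def arMul (t s : PowerSeries ℤ × PowerSeries ℤ × PowerSeries ℤ) :
    PowerSeries ℤ × PowerSeries ℤ × PowerSeries ℤ :=
  (act t.1 t.2.1 t.2.2 s.1, t.2.1 * comp s.2.1 t.2.2, comp s.2.2 t.2.2)

/-- `(a,g,f)` is an almost-Riordan array: `a₀ = 1`, `g₀ = 1`, `f₀ = 0`, `f₁ = 1`. -/
def isAR (t : PowerSeries ℤ × PowerSeries ℤ × PowerSeries ℤ) : Prop :=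
  coeff 0 t.1 = 1 ∧ coeff 0 t.2.1 = 1 ∧ coeff 0 t.2.2 = 0 ∧ coeff 1 t.2.2 = 1

/-- `h̃̃ = (h − h₀ − h₁x)/x²`. -/
noncomputable def shift2 (h : PowerSeries ℤ) : PowerSeries ℤ :=
  shift (shift h)

/-- Action of a 4-tuple: `(a,b,g,f)·h = h₀ a + h₁ x b + x² g h̃̃(f)`. -/
noncomputable def act2 (a b g f h : PowerSeries ℤ) : PowerSeries ℤ :=
  C (coeff 0 h) * a + C (coeff 1 h) * (X * b) + X ^ 2 * g * comp (shift2 h) f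

/-- Product on 4-tuples:
`(a,b,g,f)·(h,k,u,v) = ((a,b,g,f)·h, (b,g,f)·k, g·u(f), v(f))`. -/
noncomputable def ar2Mul
    (t s : PowerSeries ℤ × PowerSeries ℤ × PowerSeries ℤ × PowerSeries ℤ) :
    PowerSeries ℤ × PowerSeries ℤ × PowerSeries ℤ × PowerSeries ℤ :=
  (act2 t.1 t.2.1 t.2.2.1 t.2.2.2 s.1,
   act t.2.1 t.2.2.1 t.2.2.2 s.2.1,
   t.2.2.1 * comp s.2.2.1 t.2.2.2,
   comp s.2.2.2 t.2.2.2)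

/-- Membership in `aR⁺`: `a₀ = b₀ = g₀ = 1`, `f₀ = 0`, `f₁ = 1`. -/
def isAR2 (t : PowerSeries ℤ × PowerSeries ℤ × PowerSeries ℤ × PowerSeries ℤ) : Prop :=
  coeff 0 t.1 = 1 ∧ coeff 0 t.2.1 = 1 ∧ coeff 0 t.2.2.1 = 1 ∧
    coeff 0 t.2.2.2 = 0 ∧ coeff 1 t.2.2.2 = 1

@[simp] lemma coeff_shift (h : PowerSeries ℤ) (n : ℕ) :
    coeff n (shift h) = coeff (n+1) h := by simp [shift]

lemma coeff_comp (h f : PowerSeries ℤ) (n : ℕ) :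
    coeff n (comp h f) = ∑ k ∈ Finset.range (n + 1), coeff k h * coeff n (f ^ k) := by
  simp [comp]

lemma coeff_pow_eq_zero {f : PowerSeries ℤ} (hf : coeff 0 f = 0) {n k : ℕ} (h : n < k) :
    coeff n (f ^ k) = 0 := by
  have hdvd : (X : PowerSeries ℤ) ^ k ∣ f ^ k :=
    pow_dvd_pow_of_dvd (PowerSeries.X_dvd_iff.mpr (by rwa [← coeff_zero_eq_constantCoeff_apply])) k
  exact PowerSeries.X_pow_dvd_iff.mp hdvd n h

lemma coeff_pow_self {f : PowerSeries ℤ} (hf : coeff 0 f = 0) (n : ℕ) :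
    coeff n (f ^ n) = (coeff 1 f) ^ n := by
  have hXs : f = X * shift f := by
    ext m
    cases m with
    | zero => simpa using hf
    | succ m => simp [coeff_succ_X_mul]
  conv_lhs => rw [hXs]
  rw [mul_pow]
  have := coeff_X_pow_mul ((shift f)^n) n 0
  rw [zero_add] at this
  have h1 : constantCoeff (shift f) = coeff 1 f := by
    rw [← coeff_zero_eq_constantCoeff_apply]; simp
  rw [this, coeff_zero_eq_constantCoeff_apply, map_pow, h1]

@[simp] lemma comp_C (c : ℤ) (f : PowerSeries ℤ) : comp (C c) f = C c := by
  ext n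
  rw [coeff_comp]
  rcases Nat.eq_zero_or_pos n with h | h
  · subst h; simp
  · rw [Finset.sum_eq_zero, coeff_C, if_neg h.ne']
    intro k hk
    rcases Nat.eq_zero_or_pos k with h0 | h0
    · subst h0; simp [coeff_C, h.ne']
    · rw [coeff_C, if_neg h0.ne', zero_mul]

@[simp] lemma comp_one (f : PowerSeries ℤ) : comp 1 f = 1 := by
  simpa using comp_C 1 f

@[simp] lemma comp_zero (f : PowerSeries ℤ) : comp 0 f = 0 := by
  simpa using comp_C 0 f

lemma comp_X_left (f : PowerSeries ℤ) (hf : coeff 0 f = 0) : comp X f = f := by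
  ext n
  cases n with
  | zero => simp [coeff_comp, hf]
  | succ n =>
    rw [coeff_comp, Finset.sum_eq_single 1]
    · simp
    · intro k hk hne; simp [coeff_X, hne]
    · intro h
      exact absurd (Finset.mem_range.mpr (by omega)) h

@[simp] lemma comp_X_right (h : PowerSeries ℤ) : comp h X = h := by
  ext n
  rw [coeff_comp, Finset.sum_eq_single n]
  · simp [coeff_X_pow]
  · intro k hk hne; simp [coeff_X_pow, Ne.symm hne]
  · intro hn; simp at hn
lemma comp_add (h k f : PowerSeries ℤ) : comp (h + k) f = comp h f + comp k f := by
  ext n; simp [coeff_comp, add_mul, Finset.sum_add_distrib]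

lemma comp_C_mul (c : ℤ) (h f : PowerSeries ℤ) : comp (C c * h) f = C c * comp h f := by
  ext n
  rw [coeff_comp, coeff_C_mul, coeff_comp, Finset.mul_sum]
  refine Finset.sum_congr rfl fun k _ => ?_
  rw [coeff_C_mul, mul_assoc]

lemma comp_neg (h f : PowerSeries ℤ) : comp (-h) f = - comp h f := by
  ext n; simp [coeff_comp, Finset.sum_neg_distrib]

lemma comp_sub (h k f : PowerSeries ℤ) : comp (h - k) f = comp h f - comp k f := by
  rw [sub_eq_add_neg, comp_add, comp_neg, sub_eq_add_neg]

@[simp] lemma coeff_zero_comp (h f : PowerSeries ℤ) : coeff 0 (comp h f) = coeff 0 h := by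
  simp [coeff_comp]

@[simp] lemma coeff_one_comp (h f : PowerSeries ℤ) :
    coeff 1 (comp h f) = coeff 1 h * coeff 1 f := by
  rw [coeff_comp]
  rw [show Finset.range 2 = {0, 1} from rfl]
  simp [pow_one, coeff_one]
lemma comp_mul (h k f : PowerSeries ℤ) (hf : coeff 0 f = 0) :
    comp (h * k) f = comp h f * comp k f := by
  ext n
  set S := Finset.range (n+1) ×ˢ Finset.range (n+1) with hS
  set G : ℕ × ℕ → ℤ := fun p =>
    coeff p.1 h * coeff p.2 k * coeff n (f ^ (p.1 + p.2)) with hG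
  have hdisj : (↑(Finset.range (n+1)) : Set ℕ).PairwiseDisjoint Finset.HasAntidiagonal.antidiagonal := by
    intro a _ b _ hab
    refine Finset.disjoint_left.mpr fun p hpa hpb => hab ?_
    rw [← Finset.HasAntidiagonal.mem_antidiagonal.mp hpa, ← Finset.HasAntidiagonal.mem_antidiagonal.mp hpb]
  have claimA : coeff n (comp (h * k) f) =
      ∑ p ∈ (Finset.range (n+1)).biUnion Finset.HasAntidiagonal.antidiagonal, G p := by
    rw [coeff_comp, Finset.sum_biUnion hdisj]
    refine Finset.sum_congr rfl fun c _ => ?_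
    rw [PowerSeries.coeff_mul, Finset.sum_mul]
    refine Finset.sum_congr rfl fun p hp => ?_
    rw [hG]
    simp only
    rw [Finset.HasAntidiagonal.mem_antidiagonal.mp hp]
  have claimB : coeff n (comp h f * comp k f) = ∑ p ∈ S, G p := by
    rw [PowerSeries.coeff_mul]
    have step : ∀ q ∈ Finset.HasAntidiagonal.antidiagonal n,
        coeff q.1 (comp h f) * coeff q.2 (comp k f) =
          ∑ p ∈ S, coeff p.1 h * coeff p.2 k *
            (coeff q.1 (f ^ p.1) * coeff q.2 (f ^ p.2)) := by
      intro q hq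
      have hq' := Finset.HasAntidiagonal.mem_antidiagonal.mp hq
      have e1 : coeff q.1 (comp h f) =
          ∑ a ∈ Finset.range (n+1), coeff a h * coeff q.1 (f ^ a) := by
        rw [coeff_comp]
        refine Finset.sum_subset (Finset.range_subset_range.mpr (by omega)) fun a _ ha => ?_
        rw [coeff_pow_eq_zero hf (by simp at ha ⊢; omega), mul_zero]
      have e2 : coeff q.2 (comp k f) =
          ∑ b ∈ Finset.range (n+1), coeff b k * coeff q.2 (f ^ b) := by
        rw [coeff_comp]
        refine Finset.sum_subset (Finset.range_subset_range.mpr (by omega)) fun b _ hb => ?_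
        rw [coeff_pow_eq_zero hf (by simp at hb ⊢; omega), mul_zero]
      rw [e1, e2, Finset.sum_mul_sum, hS, Finset.sum_product]
      refine Finset.sum_congr rfl fun a _ => Finset.sum_congr rfl fun b _ => by ring
    rw [Finset.sum_congr rfl step, Finset.sum_comm]
    refine Finset.sum_congr rfl fun p _ => ?_
    rw [← Finset.mul_sum, hG]
    simp only
    rw [pow_add, PowerSeries.coeff_mul]
  rw [claimA, claimB]
  refine Finset.sum_subset ?_ ?_
  · intro p hp
    simp only [Finset.mem_biUnion] at hp
    obtain ⟨c, hc, hpc⟩ := hp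
    have := Finset.HasAntidiagonal.mem_antidiagonal.mp hpc
    simp only [hS, Finset.mem_product, Finset.mem_range] at *
    omega
  · intro p hpS hpT
    have hgt : n < p.1 + p.2 := by
      by_contra hle
      exact hpT (Finset.mem_biUnion.mpr ⟨p.1 + p.2, Finset.mem_range.mpr (by omega),
        Finset.HasAntidiagonal.mem_antidiagonal.mpr rfl⟩)
    rw [hG]
    simp only
    rw [coeff_pow_eq_zero hf hgt, mul_zero]

lemma comp_pow (h f : PowerSeries ℤ) (hf : coeff 0 f = 0) (m : ℕ) :
    comp (h ^ m) f = comp h f ^ m := by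
  induction m with
  | zero => simp
  | succ m ih => rw [pow_succ, comp_mul _ _ _ hf, ih, pow_succ]

lemma comp_assoc (h f w : PowerSeries ℤ) (hf : coeff 0 f = 0) (hw : coeff 0 w = 0) :
    comp (comp h f) w = comp h (comp f w) := by
  ext n
  have hfw : coeff 0 (comp f w) = 0 := by rw [coeff_zero_comp, hf]
  rw [coeff_comp, coeff_comp]
  have e1 : ∀ k ∈ Finset.range (n+1),
      coeff k h * coeff n (comp f w ^ k) =
        ∑ j ∈ Finset.range (n+1), coeff k h * (coeff j (f ^ k) * coeff n (w ^ j)) := by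
    intro k _
    rw [← comp_pow _ _ hw, coeff_comp, Finset.mul_sum]
  have e2 : ∀ j ∈ Finset.range (n+1),
      coeff j (comp h f) * coeff n (w ^ j) =
        ∑ k ∈ Finset.range (n+1), coeff k h * (coeff j (f ^ k) * coeff n (w ^ j)) := by
    intro j hj
    rw [coeff_comp, Finset.sum_mul]
    refine (Finset.sum_subset (Finset.range_subset_range.mpr ?_) fun k _ hk => ?_).trans
      (Finset.sum_congr rfl fun k _ => by ring)
    · simp only [Finset.mem_range] at hj; omega
    · rw [coeff_pow_eq_zero hf (by simp only [Finset.mem_range] at hk ⊢; omega)]; ring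
  rw [Finset.sum_congr rfl e2, Finset.sum_congr rfl e1, Finset.sum_comm]
lemma shift_add (h k : PowerSeries ℤ) : shift (h + k) = shift h + shift k := by
  ext n; simp

lemma shift_sub (h k : PowerSeries ℤ) : shift (h - k) = shift h - shift k := by
  ext n; simp

lemma shift_C_mul (c : ℤ) (h : PowerSeries ℤ) : shift (C c * h) = C c * shift h := by
  ext n; rw [coeff_shift, coeff_C_mul, coeff_C_mul, coeff_shift]

lemma shift_neg (h : PowerSeries ℤ) : shift (-h) = - shift h := by
  ext n; simp

@[simp] lemma shift_C (c : ℤ) : shift (C c) = 0 := by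
  ext n; rw [coeff_shift, coeff_C, if_neg (Nat.succ_ne_zero n), map_zero]

@[simp] lemma shift_one : shift (1 : PowerSeries ℤ) = 0 := by
  ext n; simp [coeff_one]

@[simp] lemma shift_X : shift (X : PowerSeries ℤ) = 1 := by
  ext n; simp [coeff_X, coeff_one, eq_comm]

@[simp] lemma shift_X_mul (h : PowerSeries ℤ) : shift (X * h) = h := by
  ext n; simp [coeff_succ_X_mul]

@[simp] lemma shift2_X2_mul (h : PowerSeries ℤ) : shift2 (X ^ 2 * h) = h := by
  ext n
  have := coeff_X_pow_mul h 2 n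
  simp only [shift2, coeff_shift]
  rw [show n + 1 + 1 = n + 2 from rfl, this]

lemma shift2_add (h k : PowerSeries ℤ) : shift2 (h + k) = shift2 h + shift2 k := by
  simp [shift2, shift_add]

lemma shift2_sub (h k : PowerSeries ℤ) : shift2 (h - k) = shift2 h - shift2 k := by
  simp [shift2, shift_sub]

lemma shift2_C_mul (c : ℤ) (h : PowerSeries ℤ) : shift2 (C c * h) = C c * shift2 h := by
  rw [shift2, shift_C_mul, shift_C_mul, shift2]

@[simp] lemma shift2_one : shift2 (1 : PowerSeries ℤ) = 0 := by
  ext n; simp [shift2]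

@[simp] lemma shift2_C (c : ℤ) : shift2 (C c) = 0 := by
  rw [shift2, shift_C]; ext n; rw [coeff_shift]; simp

@[simp] lemma shift2_X : shift2 (X : PowerSeries ℤ) = 0 := by
  simp [shift2]

lemma shift2_C_X_mul (c : ℤ) (h : PowerSeries ℤ) :
    shift2 (C c * (X * h)) = C c * shift h := by
  rw [shift2, shift_C_mul, shift_X_mul, shift_C_mul]

lemma decomp1 (h : PowerSeries ℤ) : C (coeff 0 h) + X * shift h = h := by
  ext n
  cases n with
  | zero => rw [map_add, coeff_C, if_pos rfl, coeff_zero_X_mul, add_zero]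
  | succ n => rw [map_add, coeff_C, if_neg (Nat.succ_ne_zero n), coeff_succ_X_mul, coeff_shift,
      zero_add]

lemma X_mul_shift {h : PowerSeries ℤ} (h0 : coeff 0 h = 0) : X * shift h = h := by
  have := decomp1 h
  rwa [h0, map_zero, zero_add] at this

lemma decomp2 (h : PowerSeries ℤ) :
    C (coeff 0 h) + C (coeff 1 h) * X + X ^ 2 * shift2 h = h := by
  ext n
  match n with
  | 0 => rw [map_add, map_add, coeff_C, if_pos rfl, coeff_C_mul, coeff_X,
      coeff_X_pow_mul', if_neg (by norm_num)]; norm_num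
  | 1 =>
    rw [map_add, map_add, coeff_X_pow_mul', coeff_C, if_neg one_ne_zero, coeff_C_mul]
    simp
  | (n+2) =>
    have h2 := coeff_X_pow_mul (shift2 h) 2 n
    rw [map_add, map_add, coeff_C, if_neg (by omega), coeff_C_mul, coeff_X,
      if_neg (by omega), h2]
    simp [shift2]

lemma X2_mul_shift2 {h : PowerSeries ℤ} (h0 : coeff 0 h = 0) (h1 : coeff 1 h = 0) :
    X ^ 2 * shift2 h = h := by
  have := decomp2 h
  rwa [h0, h1, map_zero, zero_add, zero_mul, zero_add] at this
noncomputable def cInv (f : PowerSeries ℤ) : ℕ → ℤ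
  | n => (if n = 1 then 1 else 0) -
      ∑ k ∈ (Finset.range n).attach, cInv f k * coeff n (f ^ (k : ℕ))
  decreasing_by exact Finset.mem_range.mp k.2

lemma cInv_eq (f : PowerSeries ℤ) (n : ℕ) :
    cInv f n = (if n = 1 then 1 else 0) -
      ∑ k ∈ Finset.range n, cInv f k * coeff n (f ^ k) := by
  rw [cInv]
  congr 1
  exact Finset.sum_attach (Finset.range n) (fun k => cInv f k * coeff n (f ^ k))

noncomputable def fbar (f : PowerSeries ℤ) : PowerSeries ℤ := PowerSeries.mk (cInv f)

@[simp] lemma coeff_zero_fbar (f : PowerSeries ℤ) : coeff 0 (fbar f) = 0 := by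
  rw [fbar, coeff_mk, cInv_eq]; simp

@[simp] lemma coeff_one_fbar (f : PowerSeries ℤ) : coeff 1 (fbar f) = 1 := by
  rw [fbar, coeff_mk, cInv_eq]
  rw [Finset.range_one, Finset.sum_singleton, if_pos rfl, pow_zero, coeff_one]
  simp

lemma fbar_comp (f : PowerSeries ℤ) (h0 : coeff 0 f = 0) (h1 : coeff 1 f = 1) :
    comp (fbar f) f = X := by
  ext n
  rw [coeff_comp, Finset.sum_range_succ, coeff_pow_self h0, h1, one_pow, mul_one, fbar]
  have : ∀ k ∈ Finset.range n, coeff k (PowerSeries.mk (cInv f)) * coeff n (f ^ k)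
      = cInv f k * coeff n (f ^ k) := fun k _ => by rw [coeff_mk]
  rw [Finset.sum_congr rfl this, coeff_mk, cInv_eq, coeff_X]
  ring_nf
noncomputable def act' (a g f b : PowerSeries ℤ) : PowerSeries ℤ :=
  C (coeff 0 b) * a + X * g * comp (shift b) f

noncomputable def act2' (a b g f h : PowerSeries ℤ) : PowerSeries ℤ :=
  C (coeff 0 h) * a + C (coeff 1 h) * (X * b) + X ^ 2 * g * comp (shift2 h) f

lemma coeff_zero_act' (a g f b : PowerSeries ℤ) :
    coeff 0 (act' a g f b) = coeff 0 b * coeff 0 a := by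
  rw [act', map_add, mul_assoc, coeff_zero_X_mul, add_zero, coeff_C_mul]

lemma shift_act' (a g f b : PowerSeries ℤ) :
    shift (act' a g f b) = C (coeff 0 b) * shift a + g * comp (shift b) f := by
  rw [act', mul_assoc, shift_add, shift_C_mul, shift_X_mul]

lemma coeff_zero_act2' (a b g f h : PowerSeries ℤ) :
    coeff 0 (act2' a b g f h) = coeff 0 h * coeff 0 a := by
  rw [act2', map_add, map_add, coeff_C_mul, coeff_C_mul, coeff_zero_X_mul, mul_zero,
    mul_assoc, coeff_X_pow_mul', if_neg (by omega), add_zero, add_zero]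

lemma coeff_one_act2' (a b g f h : PowerSeries ℤ) :
    coeff 1 (act2' a b g f h) =
      coeff 0 h * coeff 1 a + coeff 1 h * coeff 0 b := by
  rw [act2', map_add, map_add, coeff_C_mul, coeff_C_mul, mul_assoc,
    coeff_X_pow_mul', if_neg (by omega), add_zero]
  congr 2
  exact coeff_succ_X_mul 0 b

lemma shift2_act2' (a b g f h : PowerSeries ℤ) :
    shift2 (act2' a b g f h) =
      C (coeff 0 h) * shift2 a + C (coeff 1 h) * shift b
        + g * comp (shift2 h) f := by
  rw [act2', mul_assoc, shift2_add, shift2_add, shift2_C_mul, shift2_C_X_mul, shift2_X2_mul]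

lemma act_eq (a g f b : PowerSeries ℤ) : act a g f b = act' a g f b := rfl
lemma act2_eq (a b g f h : PowerSeries ℤ) : act2 a b g f h = act2' a b g f h := rfl

lemma assoc2 (t s r : PowerSeries ℤ × PowerSeries ℤ × PowerSeries ℤ × PowerSeries ℤ)
    (ht : coeff 0 t.2.2.2 = 0) (hs : coeff 0 s.2.2.2 = 0) :
    ar2Mul (ar2Mul t s) r = ar2Mul t (ar2Mul s r) := by
  obtain ⟨a, b, g, f⟩ := t
  obtain ⟨a', b', g', f'⟩ := s
  obtain ⟨a'', b'', g'', f''⟩ := r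
  simp only at ht hs
  simp only [ar2Mul, act_eq, act2_eq, Prod.mk.injEq]
  refine ⟨?_, ?_, ?_, ?_⟩
  · -- first component
    conv_lhs => rw [act2', act2', act']
    conv_rhs => rw [act2', coeff_zero_act2', coeff_one_act2', shift2_act2']
    rw [comp_add, comp_add, comp_C_mul, comp_C_mul,
      comp_mul _ _ _ ht, comp_assoc _ _ _ hs ht]
    simp only [map_mul, map_add]
    ring
  · -- second component
    conv_lhs => rw [act', act']
    conv_rhs => rw [act', coeff_zero_act', shift_act']
    rw [comp_add, comp_C_mul, comp_mul _ _ _ ht, comp_assoc _ _ _ hs ht]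
    simp only [map_mul, map_add]
    ring
  · rw [comp_mul _ _ _ ht, comp_assoc _ _ _ hs ht]; ring
  · rw [comp_assoc _ _ _ hs ht]
lemma coeff_zero_mul (A B : PowerSeries ℤ) :
    coeff 0 (A * B) = coeff 0 A * coeff 0 B := by
  rw [coeff_zero_eq_constantCoeff_apply, map_mul, coeff_zero_eq_constantCoeff_apply,
    coeff_zero_eq_constantCoeff_apply]

lemma shift2_C_mul_X (c : ℤ) : shift2 (C c * X) = 0 := by
  rw [shift2_C_mul, shift2_X, mul_zero]

lemma isAR2_one : isAR2 (1, 1, 1, X) := by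
  refine ⟨by simp, by simp, by simp, by simp, by simp⟩

lemma ar2_closure (t s : PowerSeries ℤ × PowerSeries ℤ × PowerSeries ℤ × PowerSeries ℤ)
    (ht : isAR2 t) (hs : isAR2 s) : isAR2 (ar2Mul t s) := by
  obtain ⟨ht1, ht2, ht3, ht4, ht5⟩ := ht
  obtain ⟨hs1, hs2, hs3, hs4, hs5⟩ := hs
  refine ⟨?_, ?_, ?_, ?_, ?_⟩
  · show coeff 0 (act2 _ _ _ _ _) = 1
    rw [act2_eq, coeff_zero_act2', hs1, ht1, mul_one]
  · show coeff 0 (act _ _ _ _) = 1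
    rw [act_eq, coeff_zero_act', hs2, ht2, mul_one]
  · show coeff 0 (_ * comp _ _) = 1
    rw [coeff_zero_mul, coeff_zero_comp, ht3, hs3, mul_one]
  · show coeff 0 (comp _ _) = 0
    rw [coeff_zero_comp, hs4]
  · show coeff 1 (comp _ _) = 1
    rw [coeff_one_comp, hs5, ht5, mul_one]

lemma ar2_left_id (t : PowerSeries ℤ × PowerSeries ℤ × PowerSeries ℤ × PowerSeries ℤ) :
    ar2Mul (1, 1, 1, X) t = t := by
  obtain ⟨a, b, g, f⟩ := t
  simp only [ar2Mul, act2_eq, act_eq, Prod.mk.injEq]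
  refine ⟨?_, ?_, ?_, ?_⟩
  · rw [act2', comp_X_right, mul_one, mul_one, mul_one]
    exact decomp2 a
  · rw [act', comp_X_right, mul_one, mul_one]
    exact decomp1 b
  · rw [comp_X_right, one_mul]
  · rw [comp_X_right]

lemma ar2_right_id (t : PowerSeries ℤ × PowerSeries ℤ × PowerSeries ℤ × PowerSeries ℤ)
    (hf : coeff 0 t.2.2.2 = 0) : ar2Mul t (1, 1, 1, X) = t := by
  obtain ⟨a, b, g, f⟩ := t
  simp only at hf
  simp only [ar2Mul, act2_eq, act_eq, Prod.mk.injEq]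
  refine ⟨?_, ?_, ?_, ?_⟩
  · rw [act2', coeff_zero_one, map_one, one_mul]
    have h1 : coeff 1 (1 : PowerSeries ℤ) = 0 := by simp [coeff_one]
    rw [h1, map_zero, zero_mul, add_zero, shift2_one, comp_zero, mul_zero, add_zero]
  · rw [act', coeff_zero_one, map_one, one_mul, shift_one, comp_zero, mul_zero, add_zero]
  · rw [comp_one, mul_one]
  · exact comp_X_left f hf

noncomputable def rinv (t : PowerSeries ℤ × PowerSeries ℤ × PowerSeries ℤ × PowerSeries ℤ) :
    PowerSeries ℤ × PowerSeries ℤ × PowerSeries ℤ × PowerSeries ℤ :=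
  let a := t.1; let b := t.2.1; let g := t.2.2.1; let f := t.2.2.2
  let gi := PowerSeries.invOfUnit g 1
  let fb := fbar f
  (1 - C (coeff 1 a) * X +
      X ^ 2 * comp (gi * shift2 (1 - a + C (coeff 1 a) * (X * b))) fb,
   1 + X * comp (-(gi * shift b)) fb,
   comp gi fb,
   fb)

lemma coeff_zero_invOfUnit' (g : PowerSeries ℤ) :
    coeff 0 (PowerSeries.invOfUnit g 1) = 1 := by
  rw [coeff_zero_eq_constantCoeff_apply, PowerSeries.constantCoeff_invOfUnit]
  simp

lemma rinv_spec (t : PowerSeries ℤ × PowerSeries ℤ × PowerSeries ℤ × PowerSeries ℤ)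
    (ht : isAR2 t) : isAR2 (rinv t) ∧ ar2Mul t (rinv t) = (1, 1, 1, X) := by
  obtain ⟨a, b, g, f⟩ := t
  obtain ⟨ha, hb, hg, hf0, hf1⟩ := ht
  simp only at ha hb hg hf0 hf1
  set gi := PowerSeries.invOfUnit g 1 with hgi
  set fb := fbar f with hfb
  have fb0 : coeff 0 fb = 0 := coeff_zero_fbar f
  have fb1 : coeff 1 fb = 1 := coeff_one_fbar f
  have hcomp : comp fb f = X := fbar_comp f hf0 hf1
  have ggi : g * gi = 1 := PowerSeries.mul_invOfUnit g 1 (by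
    rw [← coeff_zero_eq_constantCoeff_apply, hg]; simp)
  have gi0 : coeff 0 gi = 1 := coeff_zero_invOfUnit' g
  set c := coeff 1 a with hc
  set q := 1 - a + C c * (X * b) with hq
  have hq0 : coeff 0 q = 0 := by
    rw [hq, map_add, map_sub, coeff_zero_one, ha, coeff_C_mul, coeff_zero_X_mul, mul_zero,
      add_zero, sub_self]
  have hq1 : coeff 1 q = 0 := by
    rw [hq, map_add, map_sub, coeff_C_mul, coeff_succ_X_mul 0 b, hb, mul_one]
    have : coeff 1 (1 : PowerSeries ℤ) = 0 := by simp [coeff_one]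
    rw [this, ← hc]; ring
  -- abbreviations for rinv components
  have hrinv : rinv (a, b, g, f) =
      (1 - C c * X + X ^ 2 * comp (gi * shift2 q) fb,
       1 + X * comp (-(gi * shift b)) fb, comp gi fb, fb) := rfl
  set sa := 1 - C c * X + X ^ 2 * comp (gi * shift2 q) fb with hsa
  set sb := 1 + X * comp (-(gi * shift b)) fb with hsb
  have sa0 : coeff 0 sa = 1 := by
    rw [hsa, map_add, map_sub, coeff_X_pow_mul']
    simp
  have sa1 : coeff 1 sa = -c := by
    rw [hsa, map_add, map_sub, coeff_X_pow_mul']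
    simp [coeff_one]
  have sb0 : coeff 0 sb = 1 := by
    rw [hsb, map_add, coeff_zero_one, coeff_zero_X_mul, add_zero]
  constructor
  · rw [hrinv]
    exact ⟨sa0, sb0, by rw [coeff_zero_comp, gi0], fb0, fb1⟩
  · rw [hrinv]
    simp only [ar2Mul, act2_eq, act_eq, Prod.mk.injEq]
    refine ⟨?_, ?_, ?_, ?_⟩
    · -- first component = 1
      rw [act2', sa0, sa1, map_one, one_mul]
      have hshift2 : shift2 sa = comp (gi * shift2 q) fb := by
        rw [hsa, shift2_add, shift2_sub, shift2_one, shift2_C_mul_X, sub_zero, zero_add,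
          shift2_X2_mul]
      rw [hshift2, comp_assoc _ _ _ fb0 hf0, hcomp, comp_X_right]
      have hrw : X ^ 2 * g * (gi * shift2 q) = g * gi * (X ^ 2 * shift2 q) := by ring
      rw [hrw, ggi, one_mul, X2_mul_shift2 hq0 hq1, hq, map_neg]
      ring
    · -- second component = 1
      rw [act', sb0, map_one, one_mul]
      have hshift : shift sb = comp (-(gi * shift b)) fb := by
        rw [hsb, shift_add, shift_one, shift_X_mul, zero_add]
      rw [hshift, comp_assoc _ _ _ fb0 hf0, hcomp, comp_X_right]
      have hXb : X * shift b = b - 1 := by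
        have := decomp1 b
        rw [hb, map_one] at this
        linear_combination this
      have hrw : X * g * -(gi * shift b) = -(g * gi) * (X * shift b) := by ring
      rw [hrw, ggi, hXb]
      ring
    · rw [comp_assoc _ _ _ fb0 hf0, hcomp, comp_X_right, ggi]
    · exact hcomp

/-- `aR⁺` is a group with identity `(1,1,1,x)`, the 4-tuples of the
form `(a,b,1,x)` are a normal subgroup, and the quotient is isomorphic to the
Riordan group (cosets correspond precisely to the Riordan part `(g,f)`). -/
theorem statement19 :
    (∀ t s, isAR2 t → isAR2 s → isAR2 (ar2Mul t s)) ∧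
    (∀ t s r, isAR2 t → isAR2 s → isAR2 r →
      ar2Mul (ar2Mul t s) r = ar2Mul t (ar2Mul s r)) ∧
    isAR2 (1, 1, 1, X) ∧
    (∀ t, isAR2 t → ar2Mul (1, 1, 1, X) t = t ∧ ar2Mul t (1, 1, 1, X) = t) ∧
    (∀ t, isAR2 t → ∃ s, isAR2 s ∧
      ar2Mul t s = (1, 1, 1, X) ∧ ar2Mul s t = (1, 1, 1, X)) ∧
    (∀ t s, isAR2 t → isAR2 s →
      ar2Mul t s = (1, 1, 1, X) → ar2Mul s t = (1, 1, 1, X) →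
      ∀ a b : PowerSeries ℤ, coeff 0 a = 1 → coeff 0 b = 1 →
        ∃ a' b' : PowerSeries ℤ, coeff 0 a' = 1 ∧ coeff 0 b' = 1 ∧
          ar2Mul (ar2Mul t (a, b, 1, X)) s = (a', b', 1, X)) ∧
    (∀ t t', isAR2 t → isAR2 t' →
      ((∃ a b : PowerSeries ℤ, coeff 0 a = 1 ∧ coeff 0 b = 1 ∧
          ar2Mul t (a, b, 1, X) = t') ↔ t'.2.2 = t.2.2)) := by
  
  refine ⟨ar2_closure, fun t s r ht hs _ => assoc2 t s r ht.2.2.2.1 hs.2.2.2.1, isAR2_one,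
    fun t ht => ⟨ar2_left_id t, ar2_right_id t ht.2.2.2.1⟩, ?_, ?_, ?_⟩
  · -- inverses
    intro t ht
    obtain ⟨hs, hts⟩ := rinv_spec t ht
    obtain ⟨hs', hss'⟩ := rinv_spec (rinv t) hs
    refine ⟨rinv t, hs, hts, ?_⟩
    have hst0 : coeff 0 (ar2Mul (rinv t) t).2.2.2 = 0 := by
      exact (ar2_closure _ _ hs ht).2.2.2.1
    calc ar2Mul (rinv t) t
        = ar2Mul (ar2Mul (rinv t) t) (1, 1, 1, X) := (ar2_right_id _ hst0).symm
      _ = ar2Mul (ar2Mul (rinv t) t) (ar2Mul (rinv t) (rinv (rinv t))) := by rw [hss']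
      _ = ar2Mul (ar2Mul (ar2Mul (rinv t) t) (rinv t)) (rinv (rinv t)) :=
          (assoc2 _ _ _ hst0 hs.2.2.2.1).symm
      _ = ar2Mul (ar2Mul (rinv t) (ar2Mul t (rinv t))) (rinv (rinv t)) := by
          rw [assoc2 (rinv t) t (rinv t) hs.2.2.2.1 ht.2.2.2.1]
      _ = ar2Mul (ar2Mul (rinv t) (1, 1, 1, X)) (rinv (rinv t)) := by rw [hts]
      _ = ar2Mul (rinv t) (rinv (rinv t)) := by rw [ar2_right_id (rinv t) hs.2.2.2.1]
      _ = (1, 1, 1, X) := hss'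
  · -- normality
    intro t s ht hs hts _ a b ha hb
    have hn : isAR2 (a, b, 1, X) := ⟨ha, hb, by simp, by simp, by simp⟩
    have hp : isAR2 (ar2Mul (ar2Mul t (a, b, 1, X)) s) :=
      ar2_closure _ s (ar2_closure t _ ht hn) hs
    refine ⟨(ar2Mul (ar2Mul t (a, b, 1, X)) s).1,
      (ar2Mul (ar2Mul t (a, b, 1, X)) s).2.1, hp.1, hp.2.1, ?_⟩
    have e1 : (ar2Mul t (a, b, 1, X)).2.2.1 = t.2.2.1 := by
      show t.2.2.1 * comp 1 t.2.2.2 = t.2.2.1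
      rw [comp_one, mul_one]
    have e2 : (ar2Mul t (a, b, 1, X)).2.2.2 = t.2.2.2 := comp_X_left _ ht.2.2.2.1
    have h3 : (ar2Mul (ar2Mul t (a, b, 1, X)) s).2.2.1 = 1 := by
      show (ar2Mul t (a, b, 1, X)).2.2.1 * comp s.2.2.1 (ar2Mul t (a, b, 1, X)).2.2.2 = 1
      rw [e1, e2]
      exact congrArg (fun z => z.2.2.1) hts
    have h4 : (ar2Mul (ar2Mul t (a, b, 1, X)) s).2.2.2 = X := by
      show comp s.2.2.2 (ar2Mul t (a, b, 1, X)).2.2.2 = X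
      rw [e2]
      exact congrArg (fun z => z.2.2.2) hts
    exact Prod.ext rfl (Prod.ext rfl (Prod.ext h3 h4))
  · -- cosets
    intro t t' ht ht'
    constructor
    · rintro ⟨a, b, ha, hb, heq⟩
      rw [← heq]
      show ((ar2Mul t (a, b, 1, X)).2.2.1, (ar2Mul t (a, b, 1, X)).2.2.2) = t.2.2
      have e1 : (ar2Mul t (a, b, 1, X)).2.2.1 = t.2.2.1 := by
        show t.2.2.1 * comp 1 t.2.2.2 = t.2.2.1
        rw [comp_one, mul_one]
      have e2 : (ar2Mul t (a, b, 1, X)).2.2.2 = t.2.2.2 := comp_X_left _ ht.2.2.2.1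
      rw [e1, e2]
    · intro h22
      set g := t.2.2.1 with hgdef
      set f := t.2.2.2 with hfdef
      have hg : coeff 0 g = 1 := ht.2.2.1
      have hf0 : coeff 0 f = 0 := ht.2.2.2.1
      have hf1 : coeff 1 f = 1 := ht.2.2.2.2
      set gi := PowerSeries.invOfUnit g 1 with hgi
      set fb := fbar f with hfb
      have fb0 : coeff 0 fb = 0 := coeff_zero_fbar f
      have hcomp : comp fb f = X := fbar_comp f hf0 hf1
      have ggi : g * gi = 1 := PowerSeries.mul_invOfUnit g 1 (by
        rw [← coeff_zero_eq_constantCoeff_apply, hg]; simp)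
      set c := coeff 1 t'.1 - coeff 1 t.1 with hc
      set q := t'.1 - t.1 - C c * (X * t.2.1) with hq
      set p := t'.2.1 - t.2.1 with hp
      have hq0 : coeff 0 q = 0 := by
        rw [hq, map_sub, map_sub, ht'.1, ht.1, coeff_C_mul, coeff_zero_X_mul, mul_zero,
          sub_zero, sub_self]
      have hq1 : coeff 1 q = 0 := by
        rw [hq, map_sub, map_sub, coeff_C_mul, coeff_succ_X_mul 0 t.2.1, ht.2.1, mul_one, ← hc]
        ring
      have hp0 : coeff 0 p = 0 := by
        rw [hp, map_sub, ht'.2.1, ht.2.1, sub_self]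
      refine ⟨1 + C c * X + X ^ 2 * comp (gi * shift2 q) fb,
        1 + X * comp (gi * shift p) fb, ?_, ?_, ?_⟩
      · rw [map_add, map_add, coeff_C_mul, coeff_X_pow_mul']
        simp
      · rw [map_add]
        simp
      · -- the product equals t'
        set A := 1 + C c * X + X ^ 2 * comp (gi * shift2 q) fb with hA
        set B := 1 + X * comp (gi * shift p) fb with hB
        have hA0 : coeff 0 A = 1 := by
          rw [hA, map_add, map_add, coeff_C_mul, coeff_X_pow_mul']
          simp
        have hA1 : coeff 1 A = c := by
          rw [hA, map_add, map_add, coeff_X_pow_mul', if_neg (by omega), add_zero]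
          simp [coeff_one]
        have hB0 : coeff 0 B = 1 := by
          rw [hB, map_add]
          simp
        have c1 : act2 t.1 t.2.1 g f A = t'.1 := by
          rw [act2_eq, act2', hA0, hA1, map_one, one_mul]
          have hs2A : shift2 A = comp (gi * shift2 q) fb := by
            rw [hA, shift2_add, shift2_add, shift2_one, shift2_C_mul_X, add_zero, zero_add,
              shift2_X2_mul]
          rw [hs2A, comp_assoc _ _ _ fb0 hf0, hcomp, comp_X_right]
          have hrw : X ^ 2 * g * (gi * shift2 q) = g * gi * (X ^ 2 * shift2 q) := by ring
          rw [hrw, ggi, one_mul, X2_mul_shift2 hq0 hq1, hq]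
          ring
        have c2 : act t.2.1 g f B = t'.2.1 := by
          rw [act_eq, act', hB0, map_one, one_mul]
          have hsB : shift B = comp (gi * shift p) fb := by
            rw [hB, shift_add, shift_one, shift_X_mul, zero_add]
          rw [hsB, comp_assoc _ _ _ fb0 hf0, hcomp, comp_X_right]
          have hrw : X * g * (gi * shift p) = g * gi * (X * shift p) := by ring
          rw [hrw, ggi, one_mul, X_mul_shift hp0, hp]
          ring
        have c3 : g * comp 1 f = t'.2.2.1 := by
          rw [comp_one, mul_one, h22]
        have c4 : comp X f = t'.2.2.2 := by
          rw [comp_X_left f hf0, h22]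
        exact Prod.ext c1 (Prod.ext c2 (Prod.ext c3 c4))
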